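/- The functions u^ε converge uniformly to u on [0,1] as ε → 0⁺: for every δ > 0 there exists ε₀ > 0 such that for all ε ∈ (0, ε₀) and all r ∈ [0,1], |u^ε(r) − u(r)| ≤ δ. -/

import Mathlib

open Filter Set Real MeasureTheory intervalIntegral

lemma pow_sub_pow_le' (m : ℕ) {a b : ℝ} (hb : 0 ≤ b) (hab : b ≤ a) :
    a ^ m - b ^ m ≤ m * a ^ (m - 1) * (a - b) := by
  induction m with
  | zero => simp
  | succ k ih =>
    have ha : 0 ≤ a := hb.trans hab
    have hbk : b ^ k ≤ a ^ k := pow_le_pow_left₀ hb hab k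
    have h1 : a * (a ^ k - b ^ k) ≤ a * (k * a ^ (k - 1) * (a - b)) := by
      apply mul_le_mul_of_nonneg_left ih ha
    have h2 : a * (k * a ^ (k - 1) * (a - b)) ≤ k * a ^ k * (a - b) := by
      rcases Nat.eq_zero_or_pos k with hk | hk
      · simp [hk]
      · have : a * a ^ (k - 1) = a ^ k := by
          rw [← pow_succ']
          congr 1
          omega
        refine le_of_eq ?_
        calc a * (k * a ^ (k - 1) * (a - b)) = k * (a * a ^ (k-1)) * (a - b) := by ring
          _ = k * a ^ k * (a - b) := by rw [this]
    have h3 : (a - b) * b ^ k ≤ (a - b) * a ^ k :=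
      mul_le_mul_of_nonneg_left hbk (by linarith)
    have key : a ^ (k+1) - b ^ (k+1) = a * (a ^ k - b ^ k) + (a - b) * b ^ k := by ring
    rw [key]
    push_cast
    calc a * (a ^ k - b ^ k) + (a - b) * b ^ k
        ≤ k * a ^ k * (a - b) + (a - b) * a ^ k := by linarith
      _ = (k + 1) * a ^ (k + 1 - 1) * (a - b) := by simp; ring

lemma integral_exp_div {ε : ℝ} (hε : 0 < ε) (s : ℝ) :
    ∫ t in (0:ℝ)..s, Real.exp (t/ε) = ε * (Real.exp (s/ε) - 1) := by
  have hd : ∀ t ∈ Set.uIcc (0:ℝ) s, HasDerivAt (fun t => ε * Real.exp (t/ε)) (Real.exp (t/ε)) t := by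
    intro t _
    have h1 : HasDerivAt (fun t : ℝ => t / ε) (1 / ε) t := (hasDerivAt_id t).div_const ε
    have h2 := (h1.exp).const_mul ε
    refine h2.congr_deriv ?_
    field_simp
  rw [intervalIntegral.integral_eq_sub_of_hasDerivAt hd]
  · simp [mul_sub]
  · exact (Real.continuous_exp.comp (continuous_id.div_const ε)).intervalIntegrable 0 s

lemma integral_linexp {ε : ℝ} (hε : 0 < ε) (s : ℝ) :
    ∫ t in (0:ℝ)..s, (s - t) * Real.exp (t/ε)
      = ε^2 * Real.exp (s/ε) - s*ε - ε^2 := by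
  have hd : ∀ t ∈ Set.uIcc (0:ℝ) s,
      HasDerivAt (fun t => ((s - t)*ε + ε^2) * Real.exp (t/ε)) ((s - t) * Real.exp (t/ε)) t := by
    intro t _
    have h1 : HasDerivAt (fun t : ℝ => (s - t)*ε + ε^2) (-ε) t := by
      have := (((hasDerivAt_id t).const_sub s).mul_const ε).add_const (ε^2)
      simpa using this
    have h2 : HasDerivAt (fun t : ℝ => Real.exp (t/ε)) (Real.exp (t/ε) * (1/ε)) t :=
      ((hasDerivAt_id t).div_const ε).exp
    have := h1.mul h2
    refine this.congr_deriv ?_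
    field_simp
    ring
  rw [intervalIntegral.integral_eq_sub_of_hasDerivAt hd]
  · simp
    ring
  · exact ((continuous_const.sub continuous_id).mul
      (Real.continuous_exp.comp (continuous_id.div_const ε))).intervalIntegrable 0 s


lemma key_est (m : ℕ) (W : ℝ → ℝ) (hWc : Continuous W) {M K : ℝ} (hK : 0 ≤ K)
    (hW0 : ∀ t, 0 ≤ W t) (hWM : ∀ t, W t ≤ M)
    (hWlip : ∀ x y, |W x - W y| ≤ K * |x - y|)
    {ε s : ℝ} (hε : 0 < ε) (hs : 0 < s) :
    |(1/ε) * (s ^ m)⁻¹ * Real.exp (-s/ε) * (∫ t in (0:ℝ)..s, t ^ m * Real.exp (t/ε) * W t)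
      - W s| ≤ K * ε + M * Real.exp (-s/ε) + M * m * ε / s := by
  have hsm : (0:ℝ) < s ^ m := pow_pos hs m
  set E := Real.exp (s/ε) with hEdef
  set F := Real.exp (-s/ε) with hFdef
  have hE : 0 < E := Real.exp_pos _
  have hF : 0 < F := Real.exp_pos _
  have hEF : F * E = 1 := by
    rw [hEdef, hFdef, ← Real.exp_add]
    rw [show -s/ε + s/ε = 0 by ring, Real.exp_zero]
  clear_value E F
  set c := (1/ε) * (s ^ m)⁻¹ * F with hcdef
  have hc : 0 < c := by
    rw [hcdef]
    have : 0 < (s ^ m)⁻¹ := inv_pos.2 hsm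
    have h1 : (0:ℝ) < 1/ε := by positivity
    exact mul_pos (mul_pos h1 this) hF
  clear_value c
  have hcs : c * s ^ m = (1/ε) * F := by
    rw [hcdef]
    field_simp
  -- continuity and integrability
  have contE : Continuous fun t : ℝ => Real.exp (t/ε) :=
    Real.continuous_exp.comp (continuous_id.div_const ε)
  have contA : Continuous fun t : ℝ => t ^ m * Real.exp (t/ε) := (continuous_pow m).mul contE
  have intA : IntervalIntegrable (fun t => t ^ m * Real.exp (t/ε)) volume 0 s :=
    contA.intervalIntegrable _ _
  have intAW : IntervalIntegrable (fun t => t ^ m * Real.exp (t/ε) * W t) volume 0 s :=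
    (contA.mul hWc).intervalIntegrable _ _
  have intAD : IntervalIntegrable (fun t => t ^ m * Real.exp (t/ε) * (W t - W s)) volume 0 s :=
    (contA.mul (hWc.sub continuous_const)).intervalIntegrable _ _
  have intL : IntervalIntegrable (fun t => (s - t) * Real.exp (t/ε)) volume 0 s :=
    ((continuous_const.sub continuous_id).mul contE).intervalIntegrable _ _
  set J := ∫ t in (0:ℝ)..s, t ^ m * Real.exp (t/ε) with hJdef
  set JW := ∫ t in (0:ℝ)..s, t ^ m * Real.exp (t/ε) * W t with hJWdef
  set JD := ∫ t in (0:ℝ)..s, t ^ m * Real.exp (t/ε) * (W t - W s) with hJDdef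
  clear_value J JW JD
  -- split
  have hsplit : JW = JD + W s * J := by
    rw [hJDdef, hJWdef, hJdef]
    rw [show (fun t => t ^ m * Real.exp (t/ε) * (W t - W s))
        = fun t => t ^ m * Real.exp (t/ε) * W t - W s * (t ^ m * Real.exp (t/ε)) by
      funext t; ring]
    rw [intervalIntegral.integral_sub intAW (intA.const_mul _),
      intervalIntegral.integral_const_mul]
    ring
  -- J upper bound
  have hJle : J ≤ s ^ m * (ε * (E - 1)) := by
    rw [hJdef, hEdef, ← integral_exp_div hε s, ← intervalIntegral.integral_const_mul]
    apply intervalIntegral.integral_mono_on hs.le intA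
      ((continuous_const.mul contE).intervalIntegrable _ _)
    intro t ht
    have h1 : t ^ m ≤ s ^ m := pow_le_pow_left₀ ht.1 ht.2 m
    exact mul_le_mul_of_nonneg_right h1 (Real.exp_pos _).le
  -- J lower bound
  have hJge : s ^ m * (ε * (E - 1)) - J ≤ (m : ℝ) * s ^ (m-1) * (ε^2 * E) := by
    have heq : s ^ m * (ε * (E - 1)) - J
        = ∫ t in (0:ℝ)..s, (s ^ m - t ^ m) * Real.exp (t/ε) := by
      rw [show (fun t : ℝ => (s ^ m - t ^ m) * Real.exp (t/ε))
          = fun t => s ^ m * Real.exp (t/ε) - t ^ m * Real.exp (t/ε) by funext t; ring]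
      rw [intervalIntegral.integral_sub ((contE.intervalIntegrable 0 s).const_mul (s ^ m)) intA,
        intervalIntegral.integral_const_mul, integral_exp_div hε, hJdef, hEdef]
    rw [heq]
    have h1 : (∫ t in (0:ℝ)..s, (s ^ m - t ^ m) * Real.exp (t/ε))
        ≤ ∫ t in (0:ℝ)..s, ((m : ℝ) * s ^ (m-1)) * ((s - t) * Real.exp (t/ε)) := by
      apply intervalIntegral.integral_mono_on hs.le
        (((continuous_const.sub (continuous_pow m)).mul contE).intervalIntegrable _ _)
        ((intL.const_mul _))
      intro t ht
      have h2 : s ^ m - t ^ m ≤ (m : ℝ) * s ^ (m-1) * (s - t) := pow_sub_pow_le' m ht.1 ht.2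
      calc (s ^ m - t ^ m) * Real.exp (t/ε)
          ≤ ((m : ℝ) * s ^ (m-1) * (s - t)) * Real.exp (t/ε) :=
            mul_le_mul_of_nonneg_right h2 (Real.exp_pos _).le
        _ = ((m : ℝ) * s ^ (m-1)) * ((s - t) * Real.exp (t/ε)) := by ring
    rw [intervalIntegral.integral_const_mul, integral_linexp hε, ← hEdef] at h1
    have h3 : (0:ℝ) ≤ (m : ℝ) * s ^ (m-1) * (s * ε + ε^2) := by positivity
    nlinarith [h1]
  -- JD bound
  have hJDle : |JD| ≤ K * s ^ m * (ε^2 * E - s*ε - ε^2) := by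
    have h0 : |JD| ≤ ∫ t in (0:ℝ)..s, |t ^ m * Real.exp (t/ε) * (W t - W s)| := by
      rw [hJDdef]
      exact intervalIntegral.abs_integral_le_integral_abs hs.le
    have h1 : (∫ t in (0:ℝ)..s, |t ^ m * Real.exp (t/ε) * (W t - W s)|)
        ≤ ∫ t in (0:ℝ)..s, (K * s ^ m) * ((s - t) * Real.exp (t/ε)) := by
      apply intervalIntegral.integral_mono_on hs.le intAD.abs (intL.const_mul _)
      intro t ht
      rw [abs_mul, abs_mul, abs_of_nonneg (pow_nonneg ht.1 m),
        abs_of_nonneg (Real.exp_pos _).le]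
      have h2 : |W t - W s| ≤ K * (s - t) := by
        have := hWlip t s
        rwa [abs_of_nonpos (by linarith [ht.2] : t - s ≤ 0), neg_sub] at this
      calc t ^ m * Real.exp (t/ε) * |W t - W s|
          ≤ s ^ m * Real.exp (t/ε) * (K * (s - t)) := by
            apply mul_le_mul
            · exact mul_le_mul_of_nonneg_right (pow_le_pow_left₀ ht.1 ht.2 m) (Real.exp_pos _).le
            · exact h2
            · exact abs_nonneg _
            · positivity
        _ = (K * s ^ m) * ((s - t) * Real.exp (t/ε)) := by ring
    rw [intervalIntegral.integral_const_mul, integral_linexp hε, ← hEdef] at h1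
    calc |JD| ≤ (K * s ^ m) * (ε^2 * E - s*ε - ε^2) := le_trans h0 h1
      _ = K * s ^ m * (ε^2 * E - s*ε - ε^2) := by ring
  -- now put together
  have hcJle : c * J ≤ 1 - F := by
    have := mul_le_mul_of_nonneg_left hJle hc.le
    calc c * J ≤ c * (s ^ m * (ε * (E - 1))) := this
      _ = (c * s ^ m) * (ε * (E - 1)) := by ring
      _ = (1/ε) * F * (ε * (E - 1)) := by rw [hcs]
      _ = F * E - F := by field_simp
      _ = 1 - F := by rw [hEF]
  have hpow : (m : ℝ) * s ^ (m-1) * (s ^ m)⁻¹ ≤ (m : ℝ) / s := by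
    cases m with
    | zero => norm_num
    | succ k =>
      have h2 : (k + 1 : ℕ) - 1 = k := rfl
      refine le_of_eq ?_
      rw [h2, pow_succ, mul_inv]
      have hsk : (s : ℝ) ^ k ≠ 0 := (pow_pos hs k).ne'
      field_simp
  have hcJge : 1 - c * J ≤ F + (m : ℝ) * ε / s := by
    have h1 : c * (s ^ m * (ε * (E - 1)) - J) ≤ c * ((m : ℝ) * s ^ (m-1) * (ε^2 * E)) :=
      mul_le_mul_of_nonneg_left hJge hc.le
    have h2 : c * (s ^ m * (ε * (E - 1))) = 1 - F := by
      calc c * (s ^ m * (ε * (E - 1))) = (c * s ^ m) * (ε * (E - 1)) := by ring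
        _ = (1/ε) * F * (ε * (E - 1)) := by rw [hcs]
        _ = F * E - F := by field_simp
        _ = 1 - F := by rw [hEF]
    have h3 : c * ((m : ℝ) * s ^ (m-1) * (ε^2 * E)) ≤ (m : ℝ) * ε / s := by
      calc c * ((m : ℝ) * s ^ (m-1) * (ε^2 * E))
          = ((m : ℝ) * s ^ (m-1) * (s ^ m)⁻¹) * (ε * (1/ε) * ε) * (F * E) := by
            rw [hcdef]; ring
        _ = ((m : ℝ) * s ^ (m-1) * (s ^ m)⁻¹) * ε := by
            rw [hEF]; field_simp
        _ ≤ ((m : ℝ) / s) * ε := by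
            apply mul_le_mul_of_nonneg_right hpow hε.le
        _ = (m : ℝ) * ε / s := by ring
    have h1' : c * (s ^ m * (ε * (E - 1))) - c * J ≤ c * ((m : ℝ) * s ^ (m-1) * (ε^2 * E)) := by
      rw [← mul_sub]; exact h1
    linarith [h1', h2, h3]
  -- final assembly
  have hgoal : c * JW - W s = c * JD - W s * (1 - c * J) := by
    rw [hsplit]; ring
  rw [hgoal]
  have hnn : 0 ≤ 1 - c * J := by linarith [hcJle, hF]
  have hM : 0 ≤ M := le_trans (hW0 s) (hWM s)
  have habs : |c * JD - W s * (1 - c * J)| ≤ c * |JD| + W s * (1 - c * J) := by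
    calc |c * JD - W s * (1 - c * J)| ≤ |c * JD| + |W s * (1 - c * J)| := abs_sub _ _
      _ = c * |JD| + W s * (1 - c * J) := by
        rw [abs_mul c JD, abs_mul (W s) (1 - c * J), abs_of_nonneg hc.le, abs_of_nonneg (hW0 s), abs_of_nonneg hnn]
  have hterm1 : c * |JD| ≤ K * ε := by
    have h1 : c * |JD| ≤ c * (K * s ^ m * (ε^2 * E - s*ε - ε^2)) :=
      mul_le_mul_of_nonneg_left hJDle hc.le
    have h2 : c * (K * s ^ m * (ε^2 * E - s*ε - ε^2)) = K * (ε * (F * E) - (s + ε) * F) := by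
      calc c * (K * s ^ m * (ε^2 * E - s*ε - ε^2))
          = K * ((c * s ^ m) * (ε^2 * E - s*ε - ε^2)) := by ring
        _ = K * ((1/ε) * F * (ε^2 * E - s*ε - ε^2)) := by rw [hcs]
        _ = K * (ε * (F * E) - (s + ε) * F) := by field_simp; ring
    rw [hEF] at h2
    have h4 : 0 ≤ (s + ε) * F := by positivity
    have h5 : K * (ε * 1 - (s + ε) * F) ≤ K * ε :=
      mul_le_mul_of_nonneg_left (by linarith) hK
    linarith
  have hterm2 : W s * (1 - c * J) ≤ M * F + M * (m : ℝ) * ε / s := by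
    calc W s * (1 - c * J) ≤ M * (F + (m : ℝ) * ε / s) := by
          apply mul_le_mul (hWM s) hcJge hnn hM
      _ = M * F + M * (m : ℝ) * ε / s := by ring
  linarith [habs, hterm1, hterm2]


lemma g_bounds (m : ℕ) (W : ℝ → ℝ) (hWc : Continuous W) {M : ℝ}
    (hW0 : ∀ t, 0 ≤ W t) (hWM : ∀ t, W t ≤ M)
    {ε s : ℝ} (hε : 0 < ε) (hs : 0 < s) :
    0 ≤ (1/ε) * (s ^ m)⁻¹ * Real.exp (-s/ε) * (∫ t in (0:ℝ)..s, t ^ m * Real.exp (t/ε) * W t)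
    ∧ (1/ε) * (s ^ m)⁻¹ * Real.exp (-s/ε) * (∫ t in (0:ℝ)..s, t ^ m * Real.exp (t/ε) * W t)
      ≤ M := by
  have hsm : (0:ℝ) < s ^ m := pow_pos hs m
  have hM : 0 ≤ M := le_trans (hW0 0) (hWM 0)
  have contE : Continuous fun t : ℝ => Real.exp (t/ε) :=
    Real.continuous_exp.comp (continuous_id.div_const ε)
  have contA : Continuous fun t : ℝ => t ^ m * Real.exp (t/ε) := (continuous_pow m).mul contE
  have hc : (0:ℝ) < (1/ε) * (s ^ m)⁻¹ * Real.exp (-s/ε) := by positivity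
  have hInonneg : 0 ≤ ∫ t in (0:ℝ)..s, t ^ m * Real.exp (t/ε) * W t := by
    apply intervalIntegral.integral_nonneg hs.le
    intro t ht
    exact mul_nonneg (mul_nonneg (pow_nonneg ht.1 m) (Real.exp_pos _).le) (hW0 t)
  constructor
  · exact mul_nonneg hc.le hInonneg
  · have hIle : (∫ t in (0:ℝ)..s, t ^ m * Real.exp (t/ε) * W t)
        ≤ M * (s ^ m * (ε * (Real.exp (s/ε) - 1))) := by
      have h1 : (∫ t in (0:ℝ)..s, t ^ m * Real.exp (t/ε) * W t)
          ≤ ∫ t in (0:ℝ)..s, (M * s ^ m) * Real.exp (t/ε) := by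
        apply intervalIntegral.integral_mono_on hs.le
          ((contA.mul hWc).intervalIntegrable _ _)
          ((continuous_const.mul contE).intervalIntegrable _ _)
        intro t ht
        calc t ^ m * Real.exp (t/ε) * W t ≤ s ^ m * Real.exp (t/ε) * M := by
              apply mul_le_mul _ (hWM t) (hW0 t) (by positivity)
              exact mul_le_mul_of_nonneg_right (pow_le_pow_left₀ ht.1 ht.2 m) (Real.exp_pos _).le
          _ = (M * s ^ m) * Real.exp (t/ε) := by ring
      rw [intervalIntegral.integral_const_mul, integral_exp_div hε] at h1
      calc (∫ t in (0:ℝ)..s, t ^ m * Real.exp (t/ε) * W t)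
          ≤ M * s ^ m * (ε * (Real.exp (s/ε) - 1)) := h1
        _ = M * (s ^ m * (ε * (Real.exp (s/ε) - 1))) := by ring
    have hEF : Real.exp (-s/ε) * Real.exp (s/ε) = 1 := by
      rw [← Real.exp_add, show -s/ε + s/ε = 0 by ring, Real.exp_zero]
    have h2 : (1/ε) * (s ^ m)⁻¹ * Real.exp (-s/ε) * (M * (s ^ m * (ε * (Real.exp (s/ε) - 1))))
        = M * (1 - Real.exp (-s/ε)) := by
      rw [neg_div] at hEF
      field_simp
      linear_combination M * hEF
    calc (1/ε) * (s ^ m)⁻¹ * Real.exp (-s/ε) * (∫ t in (0:ℝ)..s, t ^ m * Real.exp (t/ε) * W t)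
        ≤ (1/ε) * (s ^ m)⁻¹ * Real.exp (-s/ε) * (M * (s ^ m * (ε * (Real.exp (s/ε) - 1)))) :=
          mul_le_mul_of_nonneg_left hIle hc.le
      _ = M * (1 - Real.exp (-s/ε)) := h2
      _ ≤ M := by nlinarith [Real.exp_pos (-s/ε), hM]

/-- The functions `u^ε` converge uniformly to `u` on `[0,1]` as `ε → 0⁺`,
where `u^ε(r) = ∫_r^1 (-p^ε(s)) ds` with
`p^ε(s) = -(1/ε) · s^{-(n-1)} e^{-s/ε} ∫_0^s t^{n-1} e^{t/ε} V(t) dt`,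
and `u(r) = ∫_r^1 V(s) ds`. -/
theorem eikonal_u_eps_tendsto_u_uniformly
    (n : ℕ) (hn : 1 ≤ n) (V : ℝ → ℝ)
    (hV0 : ∀ s ∈ Set.Icc (0:ℝ) 1, 0 ≤ V s)
    (hVb : ∃ M : ℝ, ∀ s ∈ Set.Icc (0:ℝ) 1, |V s| ≤ M)
    (hVlip : ∃ K : NNReal, LipschitzOnWith K V (Set.Icc 0 1)) :
    ∀ δ : ℝ, 0 < δ → ∃ ε₀ : ℝ, 0 < ε₀ ∧
      ∀ ε : ℝ, 0 < ε → ε < ε₀ → ∀ r ∈ Set.Icc (0:ℝ) 1,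
        |(∫ s in r..(1:ℝ),
            (1/ε) * (s ^ (n-1))⁻¹ * Real.exp (-s/ε) *
              ∫ t in (0:ℝ)..s, t ^ (n-1) * Real.exp (t/ε) * V t) -
          ∫ s in r..(1:ℝ), V s| ≤ δ := by
  obtain ⟨M, hM⟩ := hVb
  obtain ⟨K₀, hK₀⟩ := hVlip
  set K : ℝ := (K₀ : ℝ) with hKdef
  have hK : 0 ≤ K := K₀.coe_nonneg
  have hM0 : 0 ≤ M := le_trans (abs_nonneg _) (hM 0 ⟨le_refl _, zero_le_one⟩)
  set W : ℝ → ℝ := fun t => V (max (min 1 t) 0) with hWdef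
  have hproj : ∀ t : ℝ, max (min 1 t) 0 ∈ Icc (0:ℝ) 1 := fun t =>
    ⟨le_max_right _ _, max_le (min_le_left _ _) zero_le_one⟩
  have hWeq : ∀ t ∈ Icc (0:ℝ) 1, W t = V t := by
    intro t ht
    simp only [hWdef]
    rw [min_eq_right ht.2, max_eq_left ht.1]
  have hW0 : ∀ t, 0 ≤ W t := fun t => hV0 _ (hproj t)
  have hWM : ∀ t, W t ≤ M := fun t => le_trans (le_abs_self _) (hM _ (hproj t))
  have hWc : Continuous W := by
    apply (hK₀.continuousOn).comp_continuous
    · exact (continuous_const.min continuous_id).max continuous_const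
    · exact hproj
  have hWlip : ∀ x y, |W x - W y| ≤ K * |x - y| := by
    intro x y
    have h1 : dist (W x) (W y) ≤ K * dist (max (min 1 x) 0) (max (min 1 y) 0) :=
      hK₀.dist_le_mul _ (hproj x) _ (hproj y)
    rw [Real.dist_eq, Real.dist_eq] at h1
    have h2 : |max (min 1 x) 0 - max (min 1 y) 0| ≤ |x - y| := by
      refine le_trans (abs_max_sub_max_le_abs _ _ _) ?_
      refine le_trans (abs_min_sub_min_le_max 1 x 1 y) ?_
      simp
    calc |W x - W y| ≤ K * |max (min 1 x) 0 - max (min 1 y) 0| := h1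
      _ ≤ K * |x - y| := mul_le_mul_of_nonneg_left h2 hK
  clear_value K W
  intro δ hδ
  set a : ℝ := min 1 (δ / (4*M + 1)) with hadef
  have haM1 : (0:ℝ) < 4*M + 1 := by linarith
  have ha0 : 0 < a := lt_min one_pos (by positivity)
  have ha1 : a ≤ 1 := min_le_left _ _
  have haM : 2 * M * a ≤ δ / 2 := by
    have h1 : a ≤ δ / (4*M+1) := min_le_right _ _
    have h3 : a * (4*M+1) ≤ δ := by
      rw [← le_div_iff₀ haM1]; exact h1
    nlinarith [ha0, hM0]
  clear_value a
  set C : ℝ := K + M/a + M*((n-1 : ℕ) : ℝ)/a with hCdef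
  have hC0 : 0 ≤ C := by
    apply add_nonneg (add_nonneg hK (div_nonneg hM0 ha0.le))
    apply div_nonneg _ ha0.le
    positivity
  have hC1 : (0:ℝ) < C + 1 := by linarith
  clear_value C
  refine ⟨(δ/2)/(C+1), by positivity, ?_⟩
  intro ε hε hεlt r hr
  have hr1 : r ≤ (1:ℝ) := hr.2
  have contE : Continuous fun t : ℝ => Real.exp (t/ε) :=
    Real.continuous_exp.comp (continuous_id.div_const ε)
  set gfun : ℝ → ℝ := fun s => (1/ε) * (s ^ (n-1))⁻¹ * Real.exp (-s/ε) *
      ∫ t in (0:ℝ)..s, t ^ (n-1) * Real.exp (t/ε) * W t with hgdef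
  clear_value gfun
  -- replace V by W
  have houter : (∫ s in r..(1:ℝ),
      (1/ε) * (s ^ (n-1))⁻¹ * Real.exp (-s/ε) *
        ∫ t in (0:ℝ)..s, t ^ (n-1) * Real.exp (t/ε) * V t) = ∫ s in r..(1:ℝ), gfun s := by
    apply intervalIntegral.integral_congr
    intro s hs
    rw [uIcc_of_le hr1] at hs
    have hs0 : (0:ℝ) ≤ s := le_trans hr.1 hs.1
    have hinner : (∫ t in (0:ℝ)..s, t ^ (n-1) * Real.exp (t/ε) * V t)
        = ∫ t in (0:ℝ)..s, t ^ (n-1) * Real.exp (t/ε) * W t := by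
      apply intervalIntegral.integral_congr
      intro t ht
      rw [uIcc_of_le hs0] at ht
      show t ^ (n-1) * Real.exp (t/ε) * V t = t ^ (n-1) * Real.exp (t/ε) * W t
      rw [hWeq t ⟨ht.1, le_trans ht.2 hs.2⟩]
    simp only [hgdef]
    rw [hinner]
  have hVW : (∫ s in r..(1:ℝ), V s) = ∫ s in r..(1:ℝ), W s := by
    apply intervalIntegral.integral_congr
    intro s hs
    rw [uIcc_of_le hr1] at hs
    rw [hWeq s ⟨le_trans hr.1 hs.1, hs.2⟩]
  rw [houter, hVW]
  -- bounds for gfun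
  have hgb : ∀ s ∈ Icc (0:ℝ) 1, 0 ≤ gfun s ∧ gfun s ≤ M := by
    intro s hsI
    rcases eq_or_lt_of_le hsI.1 with h | h
    · have h0 : gfun 0 = 0 := by simp [hgdef]
      rw [← h, h0]
      exact ⟨le_refl 0, hM0⟩
    · simp only [hgdef]
      exact g_bounds (n-1) W hWc hW0 hWM hε h
  -- integrability
  have contprim : Continuous fun s : ℝ => ∫ t in (0:ℝ)..s, t ^ (n-1) * Real.exp (t/ε) * W t := by
    apply intervalIntegral.continuous_primitive
    intro x y
    exact (((continuous_pow _).mul contE).mul hWc).intervalIntegrable _ _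
  have hmeas : Measurable gfun := by
    simp only [hgdef]
    apply Measurable.mul _ contprim.measurable
    apply Measurable.mul
    · exact measurable_const.mul ((measurable_id.pow_const (n-1)).inv)
    · exact Real.measurable_exp.comp ((measurable_id.neg).div_const ε)
  have hgint : IntegrableOn gfun (Icc (0:ℝ) 1) := by
    apply Measure.integrableOn_of_bounded (M := M) measure_Icc_lt_top.ne
      hmeas.aestronglyMeasurable
    rw [ae_restrict_iff' measurableSet_Icc]
    apply ae_of_all
    intro s hsI
    rw [Real.norm_eq_abs, abs_of_nonneg (hgb s hsI).1]
    exact (hgb s hsI).2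
  have hWint : IntegrableOn W (Icc (0:ℝ) 1) := hWc.integrableOn_Icc
  have hφint : IntegrableOn (fun s => |gfun s - W s|) (Icc (0:ℝ) 1) := (hgint.sub hWint).abs
  have hφii : ∀ x y : ℝ, x ∈ Icc (0:ℝ) 1 → y ∈ Icc (0:ℝ) 1 →
      IntervalIntegrable (fun s => |gfun s - W s|) volume x y := fun x y hx hy =>
    (hφint.mono_set (uIcc_subset_Icc hx hy)).intervalIntegrable
  have hgii : IntervalIntegrable gfun volume r 1 :=
    (hgint.mono_set (uIcc_subset_Icc hr (right_mem_Icc.2 zero_le_one))).intervalIntegrable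
  have hWii : IntervalIntegrable W volume r 1 :=
    (hWint.mono_set (uIcc_subset_Icc hr (right_mem_Icc.2 zero_le_one))).intervalIntegrable
  have haI : a ∈ Icc (0:ℝ) 1 := ⟨ha0.le, ha1⟩
  have h0I : (0:ℝ) ∈ Icc (0:ℝ) 1 := ⟨le_refl _, zero_le_one⟩
  have h1I : (1:ℝ) ∈ Icc (0:ℝ) 1 := ⟨zero_le_one, le_refl _⟩
  -- pointwise bounds
  set B : ℝ := K * ε + M * Real.exp (-a/ε) + M * ((n-1 : ℕ) : ℝ) * ε / a with hBdef
  clear_value B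
  have hB0 : 0 ≤ B := by
    have := Real.exp_pos (-a/ε)
    have h1 : 0 ≤ M * ((n-1 : ℕ) : ℝ) * ε / a := by positivity
    linarith [mul_nonneg hK hε.le, mul_nonneg hM0 (Real.exp_pos (-a/ε)).le, hBdef, h1]
  have hp1 : (∫ s in (0:ℝ)..a, |gfun s - W s|) ≤ 2 * M * a := by
    have h1 : (∫ s in (0:ℝ)..a, |gfun s - W s|) ≤ ∫ s in (0:ℝ)..a, (2*M : ℝ) := by
      apply intervalIntegral.integral_mono_on ha0.le (hφii 0 a h0I haI)
        intervalIntegrable_const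
      intro s hs
      have hsI : s ∈ Icc (0:ℝ) 1 := ⟨hs.1, le_trans hs.2 ha1⟩
      have := hgb s hsI
      have hws := hW0 s
      have hwm := hWM s
      calc |gfun s - W s| ≤ |gfun s| + |W s| := abs_sub _ _
        _ = gfun s + W s := by rw [abs_of_nonneg this.1, abs_of_nonneg hws]
        _ ≤ 2 * M := by linarith [this.2]
    rw [intervalIntegral.integral_const, smul_eq_mul] at h1
    linarith
  have hp2 : (∫ s in a..(1:ℝ), |gfun s - W s|) ≤ B := by
    have h1 : (∫ s in a..(1:ℝ), |gfun s - W s|) ≤ ∫ s in a..(1:ℝ), B := by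
      apply intervalIntegral.integral_mono_on ha1 (hφii a 1 haI h1I)
        intervalIntegrable_const
      intro s hs
      have hs0 : 0 < s := lt_of_lt_of_le ha0 hs.1
      have hkey := key_est (n-1) W hWc hK hW0 hWM hWlip hε hs0
      have he : Real.exp (-s/ε) ≤ Real.exp (-a/ε) := by
        apply Real.exp_le_exp.2
        apply (div_le_div_iff_of_pos_right hε).mpr
        linarith [hs.1]
      have hd : M * ((n-1 : ℕ) : ℝ) * ε / s ≤ M * ((n-1 : ℕ) : ℝ) * ε / a := by
        gcongr
        exact hs.1
      simp only [hgdef]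
      rw [hBdef]
      calc |(1/ε) * (s ^ (n-1))⁻¹ * Real.exp (-s/ε) *
          (∫ t in (0:ℝ)..s, t ^ (n-1) * Real.exp (t/ε) * W t) - W s|
          ≤ K * ε + M * Real.exp (-s/ε) + M * ((n-1 : ℕ) : ℝ) * ε / s := hkey
        _ ≤ K * ε + M * Real.exp (-a/ε) + M * ((n-1 : ℕ) : ℝ) * ε / a := by
            have := mul_le_mul_of_nonneg_left he hM0
            linarith
    rw [intervalIntegral.integral_const, smul_eq_mul] at h1
    nlinarith [hB0, ha0]
  -- assemble
  have hsplit2 : (∫ s in (0:ℝ)..(1:ℝ), |gfun s - W s|)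
      = (∫ s in (0:ℝ)..a, |gfun s - W s|) + ∫ s in a..(1:ℝ), |gfun s - W s| :=
    (intervalIntegral.integral_add_adjacent_intervals (hφii 0 a h0I haI) (hφii a 1 haI h1I)).symm
  have hmain : |∫ s in r..(1:ℝ), (gfun s - W s)| ≤ 2*M*a + B := by
    calc |∫ s in r..(1:ℝ), (gfun s - W s)|
        ≤ ∫ s in r..(1:ℝ), |gfun s - W s| :=
          intervalIntegral.abs_integral_le_integral_abs hr1
      _ ≤ ∫ s in (0:ℝ)..(1:ℝ), |gfun s - W s| := by
          apply intervalIntegral.integral_mono_interval hr.1 hr1 le_rfl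
            (ae_of_all _ fun s => abs_nonneg _) (hφii 0 1 h0I h1I)
      _ = (∫ s in (0:ℝ)..a, |gfun s - W s|) + ∫ s in a..(1:ℝ), |gfun s - W s| := hsplit2
      _ ≤ 2*M*a + B := add_le_add hp1 hp2
  rw [← intervalIntegral.integral_sub hgii hWii]
  -- final arithmetic
  have hexp : Real.exp (-a/ε) ≤ ε/a := by
    have h1 : a/ε + 1 ≤ Real.exp (a/ε) := Real.add_one_le_exp _
    have h2 : 0 < a/ε := by positivity
    have h3 : Real.exp (-a/ε) = (Real.exp (a/ε))⁻¹ := by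
      rw [neg_div, Real.exp_neg]
    rw [h3]
    calc (Real.exp (a/ε))⁻¹ ≤ (a/ε)⁻¹ := by
          apply inv_anti₀ h2
          linarith
      _ = ε/a := by rw [inv_div]
  have hBle : B ≤ ε * C := by
    rw [hBdef, hCdef]
    have h1 : M * Real.exp (-a/ε) ≤ M * (ε/a) := mul_le_mul_of_nonneg_left hexp hM0
    have h2 : M * (ε/a) = ε * (M/a) := by ring
    have h3 : M * ((n-1 : ℕ) : ℝ) * ε / a = ε * (M * ((n-1 : ℕ) : ℝ) / a) := by ring
    nlinarith [h1]
  have hεC : ε * C ≤ δ/2 := by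
    have h1 : ε * (C+1) < (δ/2) := by
      have := (lt_div_iff₀ hC1).mp hεlt
      linarith
    nlinarith [hε.le, hC0]
  refine le_trans hmain ?_
  linarith [haM, hBle, hεC]
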